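/- Let 𝔻ℍ_ℂ be the algebra of dual quaternions with complex coefficients, and let h₁, h₂ ∈ 𝔻ℍ (real dual quaternions) satisfy h₁² = h₂² = −1. Then the set { x ∈ 𝔻ℍ_ℂ : (i − h₂)·x·(i − h₁) = 0 } is a free module of rank 3 over the complex dual numbers 𝔻_ℂ = ℂ[ε]/(ε²). -/

import Mathlib

/-- complexification of a real quaternion -/
noncomputable def quatC (q : Quaternion ℝ) : Quaternion ℂ :=
  ⟨(q.re : ℂ), (q.imI : ℂ), (q.imJ : ℂ), (q.imK : ℂ)⟩

/-- complexification `𝔻ℍ → 𝔻ℍ_ℂ` of a real dual quaternion -/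
noncomputable def dualQuatC (d : DualNumber (Quaternion ℝ)) : DualNumber (Quaternion ℂ) :=
  (quatC d.fst, quatC d.snd)

/-- embedding of the complex dual numbers `𝔻_ℂ = ℂ[ε]/(ε²)` into `𝔻ℍ_ℂ` (central scalars) -/
noncomputable def scalarDQ (c : DualNumber ℂ) : DualNumber (Quaternion ℂ) :=
  ((c.fst : Quaternion ℂ), (c.snd : Quaternion ℂ))

/-- the central complex unit `i` in `𝔻ℍ_ℂ` -/
noncomputable def iDQ : DualNumber (Quaternion ℂ) := ((Complex.I : Quaternion ℂ), 0)

noncomputable section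
open Quaternion TrivSqZeroExt MulOpposite

abbrev Rd := DualNumber ℂ
abbrev Ad := DualNumber (Quaternion ℂ)

def iR : Rd := (Complex.I, 0)

def mkD (u v w t : Rd) : Ad :=
  (⟨u.fst, v.fst, w.fst, t.fst⟩, ⟨u.snd, v.snd, w.snd, t.snd⟩)

def d0 (x : Ad) : Rd := (x.fst.re, x.snd.re)
def d1 (x : Ad) : Rd := (x.fst.imI, x.snd.imI)
def d2 (x : Ad) : Rd := (x.fst.imJ, x.snd.imJ)
def d3 (x : Ad) : Rd := (x.fst.imK, x.snd.imK)
theorem d0_fst (x : Ad) : ((d0 x) : Rd).fst = x.fst.re := rfl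
theorem d0_snd (x : Ad) : ((d0 x) : Rd).snd = x.snd.re := rfl
theorem d1_fst (x : Ad) : ((d1 x) : Rd).fst = x.fst.imI := rfl
theorem d1_snd (x : Ad) : ((d1 x) : Rd).snd = x.snd.imI := rfl
theorem d2_fst (x : Ad) : ((d2 x) : Rd).fst = x.fst.imJ := rfl
theorem d2_snd (x : Ad) : ((d2 x) : Rd).snd = x.snd.imJ := rfl
theorem d3_fst (x : Ad) : ((d3 x) : Rd).fst = x.fst.imK := rfl
theorem d3_snd (x : Ad) : ((d3 x) : Rd).snd = x.snd.imK := rfl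

theorem dext {x y : Ad} (h0 : d0 x = d0 y) (h1 : d1 x = d1 y) (h2 : d2 x = d2 y)
    (h3 : d3 x = d3 y) : x = y := by
  have f0 := congrArg TrivSqZeroExt.fst h0
  have f1 := congrArg TrivSqZeroExt.fst h1
  have f2 := congrArg TrivSqZeroExt.fst h2
  have f3 := congrArg TrivSqZeroExt.fst h3
  have s0 := congrArg TrivSqZeroExt.snd h0
  have s1 := congrArg TrivSqZeroExt.snd h1
  have s2 := congrArg TrivSqZeroExt.snd h2
  have s3 := congrArg TrivSqZeroExt.snd h3
  simp only [d0, d1, d2, d3, fst_mk, snd_mk] at f0 f1 f2 f3 s0 s1 s2 s3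
  exact TrivSqZeroExt.ext (Quaternion.ext _ _ f0 f1 f2 f3) (Quaternion.ext _ _ s0 s1 s2 s3)

@[simp] theorem d0_mk (u v w t : Rd) : d0 (mkD u v w t) = u := rfl
@[simp] theorem d1_mk (u v w t : Rd) : d1 (mkD u v w t) = v := rfl
@[simp] theorem d2_mk (u v w t : Rd) : d2 (mkD u v w t) = w := rfl
@[simp] theorem d3_mk (u v w t : Rd) : d3 (mkD u v w t) = t := rfl

theorem d0_mul (x y : Ad) :
    d0 (x * y) = d0 x * d0 y - d1 x * d1 y - d2 x * d2 y - d3 x * d3 y := by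
  refine TrivSqZeroExt.ext ?_ ?_ <;>
    simp only [d0_fst, d0_snd, d1_fst, d1_snd, d2_fst, d2_snd, d3_fst, d3_snd, TrivSqZeroExt.fst_mul, TrivSqZeroExt.snd_mul, fst_mk, snd_mk,
      fst_sub, snd_sub, smul_eq_mul, op_smul_eq_mul, Quaternion.re_mul, Quaternion.re_add,
      Quaternion.re_sub] <;> ring

theorem d1_mul (x y : Ad) :
    d1 (x * y) = d0 x * d1 y + d1 x * d0 y + d2 x * d3 y - d3 x * d2 y := by
  refine TrivSqZeroExt.ext ?_ ?_ <;>
    simp only [d0_fst, d0_snd, d1_fst, d1_snd, d2_fst, d2_snd, d3_fst, d3_snd, TrivSqZeroExt.fst_mul, TrivSqZeroExt.snd_mul, fst_mk, snd_mk,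
      fst_sub, snd_sub, fst_add, snd_add, smul_eq_mul, op_smul_eq_mul, Quaternion.imI_mul,
      Quaternion.imI_add, Quaternion.imI_sub] <;> ring

theorem d2_mul (x y : Ad) :
    d2 (x * y) = d0 x * d2 y + d2 x * d0 y + d3 x * d1 y - d1 x * d3 y := by
  refine TrivSqZeroExt.ext ?_ ?_ <;>
    simp only [d0_fst, d0_snd, d1_fst, d1_snd, d2_fst, d2_snd, d3_fst, d3_snd, TrivSqZeroExt.fst_mul, TrivSqZeroExt.snd_mul, fst_mk, snd_mk,
      fst_sub, snd_sub, fst_add, snd_add, smul_eq_mul, op_smul_eq_mul, Quaternion.imJ_mul,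
      Quaternion.imJ_add, Quaternion.imJ_sub] <;> ring

theorem d3_mul (x y : Ad) :
    d3 (x * y) = d0 x * d3 y + d3 x * d0 y + d1 x * d2 y - d2 x * d1 y := by
  refine TrivSqZeroExt.ext ?_ ?_ <;>
    simp only [d0_fst, d0_snd, d1_fst, d1_snd, d2_fst, d2_snd, d3_fst, d3_snd, TrivSqZeroExt.fst_mul, TrivSqZeroExt.snd_mul, fst_mk, snd_mk,
      fst_sub, snd_sub, fst_add, snd_add, smul_eq_mul, op_smul_eq_mul, Quaternion.imK_mul,
      Quaternion.imK_add, Quaternion.imK_sub] <;> ring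

theorem d0_add (x y : Ad) : d0 (x + y) = d0 x + d0 y := by
  refine TrivSqZeroExt.ext ?_ ?_ <;>
    simp [d0_fst, d0_snd, fst_add, snd_add]
theorem d1_add (x y : Ad) : d1 (x + y) = d1 x + d1 y := by
  refine TrivSqZeroExt.ext ?_ ?_ <;> simp [d1_fst, d1_snd, fst_add, snd_add]
theorem d2_add (x y : Ad) : d2 (x + y) = d2 x + d2 y := by
  refine TrivSqZeroExt.ext ?_ ?_ <;> simp [d2_fst, d2_snd, fst_add, snd_add]
theorem d3_add (x y : Ad) : d3 (x + y) = d3 x + d3 y := by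
  refine TrivSqZeroExt.ext ?_ ?_ <;> simp [d3_fst, d3_snd, fst_add, snd_add]

theorem d0_zero : d0 0 = 0 := rfl
theorem d1_zero : d1 0 = 0 := rfl
theorem d2_zero : d2 0 = 0 := rfl
theorem d3_zero : d3 0 = 0 := rfl

theorem d0_sub (x y : Ad) : d0 (x - y) = d0 x - d0 y := by
  refine TrivSqZeroExt.ext ?_ ?_ <;> simp [d0_fst, d0_snd, fst_sub, snd_sub]
theorem d1_sub (x y : Ad) : d1 (x - y) = d1 x - d1 y := by
  refine TrivSqZeroExt.ext ?_ ?_ <;> simp [d1_fst, d1_snd, fst_sub, snd_sub]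
theorem d2_sub (x y : Ad) : d2 (x - y) = d2 x - d2 y := by
  refine TrivSqZeroExt.ext ?_ ?_ <;> simp [d2_fst, d2_snd, fst_sub, snd_sub]
theorem d3_sub (x y : Ad) : d3 (x - y) = d3 x - d3 y := by
  refine TrivSqZeroExt.ext ?_ ?_ <;> simp [d3_fst, d3_snd, fst_sub, snd_sub]

def D0 : Ad →+ Rd := ⟨⟨d0, d0_zero⟩, d0_add⟩
def D1 : Ad →+ Rd := ⟨⟨d1, d1_zero⟩, d1_add⟩
def D2 : Ad →+ Rd := ⟨⟨d2, d2_zero⟩, d2_add⟩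
def D3 : Ad →+ Rd := ⟨⟨d3, d3_zero⟩, d3_add⟩

def Dm : Fin 4 → (Ad →+ Rd) := ![D0, D1, D2, D3]

@[simp] theorem D0_apply (x : Ad) : D0 x = d0 x := rfl
@[simp] theorem D1_apply (x : Ad) : D1 x = d1 x := rfl
@[simp] theorem D2_apply (x : Ad) : D2 x = d2 x := rfl
@[simp] theorem D3_apply (x : Ad) : D3 x = d3 x := rfl

theorem scalarDQ_eq (s : Rd) : scalarDQ s = mkD s 0 0 0 := by
  refine TrivSqZeroExt.ext ?_ ?_ <;>
    refine Quaternion.ext _ _ ?_ ?_ ?_ ?_ <;>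
    simp [scalarDQ, mkD, fst_mk, snd_mk, Quaternion.re_coe, Quaternion.imI_coe,
      Quaternion.imJ_coe, Quaternion.imK_coe] <;> rfl

theorem iDQ_eq : iDQ = mkD iR 0 0 0 := by
  refine TrivSqZeroExt.ext ?_ ?_ <;>
    refine Quaternion.ext _ _ ?_ ?_ ?_ ?_ <;>
    simp [iDQ, iR, mkD, fst_mk, snd_mk, Quaternion.re_coe, Quaternion.imI_coe,
      Quaternion.imJ_coe, Quaternion.imK_coe] <;> rfl

theorem ds0 (s : Rd) (x : Ad) : d0 (scalarDQ s * x) = s * d0 x := by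
  rw [scalarDQ_eq, d0_mul]; simp
theorem ds1 (s : Rd) (x : Ad) : d1 (scalarDQ s * x) = s * d1 x := by
  rw [scalarDQ_eq, d1_mul]; simp
theorem ds2 (s : Rd) (x : Ad) : d2 (scalarDQ s * x) = s * d2 x := by
  rw [scalarDQ_eq, d2_mul]; simp
theorem ds3 (s : Rd) (x : Ad) : d3 (scalarDQ s * x) = s * d3 x := by
  rw [scalarDQ_eq, d3_mul]; simp

theorem hiR : iR * iR = (-1 : Rd) := by
  refine TrivSqZeroExt.ext ?_ ?_ <;>
    simp [(show iR.fst = Complex.I from rfl), (show iR.snd = 0 from rfl), TrivSqZeroExt.fst_mul, TrivSqZeroExt.snd_mul, fst_mk, snd_mk, fst_neg, snd_neg,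
      Complex.I_mul_I]

theorem cyc (x y : Ad) : d0 (x * y) = d0 (y * x) := by rw [d0_mul, d0_mul]; ring

theorem unitR {s : Rd} (h : s.fst ≠ 0) : IsUnit s :=
  TrivSqZeroExt.isUnit_iff_isUnit_fst.mpr h.isUnit

theorem cancelD {α : Rd} (hα : IsUnit α) {y : Ad} (h : scalarDQ α * y = 0) : y = 0 := by
  refine dext ?_ ?_ ?_ ?_
  · have h' := congrArg d0 h
    rw [ds0, d0_zero] at h'
    rw [d0_zero]
    exact hα.mul_right_eq_zero.mp h'
  · have h' := congrArg d1 h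
    rw [ds1, d1_zero] at h'
    rw [d1_zero]
    exact hα.mul_right_eq_zero.mp h'
  · have h' := congrArg d2 h
    rw [ds2, d2_zero] at h'
    rw [d2_zero]
    exact hα.mul_right_eq_zero.mp h'
  · have h' := congrArg d3 h
    rw [ds3, d3_zero] at h'
    rw [d3_zero]
    exact hα.mul_right_eq_zero.mp h'

def uq : Fin 4 → Ad := ![mkD 1 0 0 0, mkD 0 1 0 0, mkD 0 0 1 0, mkD 0 0 0 1]

theorem Duq (m n : Fin 4) : Dm m (uq n) = if n = m then 1 else 0 := by
  fin_cases m <;> fin_cases n <;>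
    simp [Dm, uq, D0_apply, D1_apply, D2_apply, D3_apply]

def Ed (p q r : Rd) : Ad := mkD iR (-p) (-q) (-r)

set_option maxHeartbeats 1600000 in
set_option maxRecDepth 8000 in
theorem keyId0 (p1 q1 r1 p2 q2 r2 : Rd) (hn1 : p1*p1 + q1*q1 + r1*r1 = 1)
    (hn2 : p2*p2 + q2*q2 + r2*r2 = 1) (x : Ad) :
    scalarDQ (d0 (mkD 1 0 0 0 * (Ed p1 q1 r1 * mkD 1 0 0 0 * Ed p2 q2 r2))) * (Ed p2 q2 r2 * x * Ed p1 q1 r1)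
      = scalarDQ (d0 (x * (Ed p1 q1 r1 * mkD 1 0 0 0 * Ed p2 q2 r2))) * (Ed p2 q2 r2 * mkD 1 0 0 0 * Ed p1 q1 r1) := by
  have hiR' := hiR
  refine dext ?_ ?_ ?_ ?_ <;>
    simp only [scalarDQ_eq, d0_mul, d1_mul, d2_mul, d3_mul, Ed, d0_mk, d1_mk, d2_mk, d3_mk]
  · linear_combination (0:Rd) * hiR'
  · linear_combination ((d3 x)*p2*r2 + (d3 x)*p1*r1 + (d2 x)*p2*q2 + (d2 x)*p1*q1 + (-1)*(d1 x) + (d1 x)*p2^2 + (d1 x)*p1^2 + (-1)*iR*(d3 x)*q2 + iR*(d3 x)*q1 + iR*(d2 x)*r2 + (-1)*iR*(d2 x)*r1 + iR^2*(d1 x)) * hiR' + ((d3 x)*p2*r2 + (d2 x)*p2*q2 + (-1)*(d1 x)*r2^2 + (-1)*(d1 x)*q2^2 + (-1)*iR*(d3 x)*q2 + iR*(d2 x)*r2) * hn1 + ((d3 x)*p1*r1 + (d2 x)*p1*q1 + (-1)*(d1 x) + (d1 x)*p1^2 + iR*(d3 x)*q1 + (-1)*iR*(d2 x)*r1) * 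hn2
  · linear_combination ((d3 x)*q2*r2 + (d3 x)*q1*r1 + (-1)*(d2 x) + (d2 x)*q2^2 + (d2 x)*q1^2 + (d1 x)*p2*q2 + (d1 x)*p1*q1 + iR*(d3 x)*p2 + (-1)*iR*(d3 x)*p1 + (-1)*iR*(d1 x)*r2 + iR*(d1 x)*r1 + iR^2*(d2 x)) * hiR' + ((d3 x)*q2*r2 + (-1)*(d2 x)*r2^2 + (-1)*(d2 x)*p2^2 + (d1 x)*p2*q2 + iR*(d3 x)*p2 + (-1)*iR*(d1 x)*r2) * hn1 + ((d3 x)*q1*r1 + (-1)*(d2 x) + (d2 x)*q1^2 + (d1 x)*p1*q1 + (-1)*iR*(d3 x)*p1 + iR*(d1 x)*r1) * hn2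
  · linear_combination ((-1)*(d3 x) + (d3 x)*r2^2 + (d3 x)*r1^2 + (d2 x)*q2*r2 + (d2 x)*q1*r1 + (d1 x)*p2*r2 + (d1 x)*p1*r1 + (-1)*iR*(d2 x)*p2 + iR*(d2 x)*p1 + iR*(d1 x)*q2 + (-1)*iR*(d1 x)*q1 + iR^2*(d3 x)) * hiR' + ((-1)*(d3 x) + (d3 x)*r2^2 + (d2 x)*q2*r2 + (d1 x)*p2*r2 + (-1)*iR*(d2 x)*p2 + iR*(d1 x)*q2) * hn1 + ((-1)*(d3 x)*q1^2 + (-1)*(d3 x)*p1^2 + (d2 x)*q1*r1 + (d1 x)*p1*r1 + iR*(d2 x)*p1 + (-1)*iR*(d1 x)*q1) * hn2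

set_option maxHeartbeats 1600000 in
set_option maxRecDepth 8000 in
theorem keyId1 (p1 q1 r1 p2 q2 r2 : Rd) (hn1 : p1*p1 + q1*q1 + r1*r1 = 1)
    (hn2 : p2*p2 + q2*q2 + r2*r2 = 1) (x : Ad) :
    scalarDQ (d0 (mkD 0 1 0 0 * (Ed p1 q1 r1 * mkD 0 1 0 0 * Ed p2 q2 r2))) * (Ed p2 q2 r2 * x * Ed p1 q1 r1)
      = scalarDQ (d0 (x * (Ed p1 q1 r1 * mkD 0 1 0 0 * Ed p2 q2 r2))) * (Ed p2 q2 r2 * mkD 0 1 0 0 * Ed p1 q1 r1) := by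
  have hiR' := hiR
  refine dext ?_ ?_ ?_ ?_ <;>
    simp only [scalarDQ_eq, d0_mul, d1_mul, d2_mul, d3_mul, Ed, d0_mk, d1_mk, d2_mk, d3_mk]
  · linear_combination ((-1)*(d3 x)*p2*q2 + (d3 x)*p1*q1 + (d2 x)*p2*r2 + (-1)*(d2 x)*p1*r1 + (d0 x) + (-1)*(d0 x)*p2^2 + (-1)*(d0 x)*p1^2 + (-1)*iR*(d3 x)*r2 + (-1)*iR*(d3 x)*r1 + (-1)*iR*(d2 x)*q2 + (-1)*iR*(d2 x)*q1 + (-1)*iR^2*(d0 x)) * hiR' + ((-1)*(d3 x)*p2*q2 + (d2 x)*p2*r2 + (d0 x)*r2^2 + (d0 x)*q2^2 + (-1)*iR*(d3 x)*r2 + (-1)*iR*(d2 x)*q2) * hn1 + ((d3 x)*p1*q1 + (-1)*(d2 x)*p1*r1 + (d0 x) + (-1)*(d0 x)*p1^2 + (-1)*iR*(d3 x)*r1 + (-1)*iR*(d2 x)*q1) * hn2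
  · linear_combination (0:Rd) * hiR'
  · linear_combination ((d3 x)*q2*r2 + (d3 x)*q1*r1 + (d2 x) + (-1)*(d2 x)*r2^2 + (-1)*(d2 x)*r1^2 + (d0 x)*p2*r2 + (-1)*(d0 x)*p1*r1 + (-1)*iR*(d3 x)*p2 + iR*(d3 x)*p1 + iR*(d0 x)*q2 + iR*(d0 x)*q1 + (-1)*iR^2*(d2 x)) * hiR' + ((d3 x)*q2*r2 + (d2 x) + (-1)*(d2 x)*r2^2 + (d0 x)*p2*r2 + (-1)*iR*(d3 x)*p2 + iR*(d0 x)*q2) * hn1 + ((d3 x)*q1*r1 + (d2 x)*q1^2 + (d2 x)*p1^2 + (-1)*(d0 x)*p1*r1 + iR*(d3 x)*p1 + iR*(d0 x)*q1) * hn2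
  · linear_combination ((d3 x) + (-1)*(d3 x)*q2^2 + (-1)*(d3 x)*q1^2 + (d2 x)*q2*r2 + (d2 x)*q1*r1 + (-1)*(d0 x)*p2*q2 + (d0 x)*p1*q1 + iR*(d2 x)*p2 + (-1)*iR*(d2 x)*p1 + iR*(d0 x)*r2 + iR*(d0 x)*r1 + (-1)*iR^2*(d3 x)) * hiR' + ((d3 x)*r2^2 + (d3 x)*p2^2 + (d2 x)*q2*r2 + (-1)*(d0 x)*p2*q2 + iR*(d2 x)*p2 + iR*(d0 x)*r2) * hn1 + ((d3 x) + (-1)*(d3 x)*q1^2 + (d2 x)*q1*r1 + (d0 x)*p1*q1 + (-1)*iR*(d2 x)*p1 + iR*(d0 x)*r1) * hn2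

set_option maxHeartbeats 1600000 in
set_option maxRecDepth 8000 in
theorem keyId2 (p1 q1 r1 p2 q2 r2 : Rd) (hn1 : p1*p1 + q1*q1 + r1*r1 = 1)
    (hn2 : p2*p2 + q2*q2 + r2*r2 = 1) (x : Ad) :
    scalarDQ (d0 (mkD 0 0 1 0 * (Ed p1 q1 r1 * mkD 0 0 1 0 * Ed p2 q2 r2))) * (Ed p2 q2 r2 * x * Ed p1 q1 r1)
      = scalarDQ (d0 (x * (Ed p1 q1 r1 * mkD 0 0 1 0 * Ed p2 q2 r2))) * (Ed p2 q2 r2 * mkD 0 0 1 0 * Ed p1 q1 r1) := by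
  have hiR' := hiR
  refine dext ?_ ?_ ?_ ?_ <;>
    simp only [scalarDQ_eq, d0_mul, d1_mul, d2_mul, d3_mul, Ed, d0_mk, d1_mk, d2_mk, d3_mk]
  · linear_combination ((d3 x)*p2*q2 + (-1)*(d3 x)*p1*q1 + (-1)*(d1 x)*q2*r2 + (d1 x)*q1*r1 + (d0 x) + (-1)*(d0 x)*q2^2 + (-1)*(d0 x)*q1^2 + (-1)*iR*(d3 x)*r2 + (-1)*iR*(d3 x)*r1 + (-1)*iR*(d1 x)*p2 + (-1)*iR*(d1 x)*p1 + (-1)*iR^2*(d0 x)) * hiR' + ((d3 x)*p2*q2 + (-1)*(d1 x)*q2*r2 + (d0 x)*r2^2 + (d0 x)*p2^2 + (-1)*iR*(d3 x)*r2 + (-1)*iR*(d1 x)*p2) * hn1 + ((-1)*(d3 x)*p1*q1 + (d1 x)*q1*r1 + (d0 x) + (-1)*(d0 x)*q1^2 + (-1)*iR*(d3 x)*r1 + (-1)*iR*(d1 x)*p1) * hn2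
  · linear_combination ((d3 x)*p2*r2 + (d3 x)*p1*r1 + (d1 x) + (-1)*(d1 x)*r2^2 + (-1)*(d1 x)*r1^2 + (-1)*(d0 x)*q2*r2 + (d0 x)*q1*r1 + iR*(d3 x)*q2 + (-1)*iR*(d3 x)*q1 + iR*(d0 x)*p2 + iR*(d0 x)*p1 + (-1)*iR^2*(d1 x)) * hiR' + ((d3 x)*p2*r2 + (d1 x) + (-1)*(d1 x)*r2^2 + (-1)*(d0 x)*q2*r2 + iR*(d3 x)*q2 + iR*(d0 x)*p2) * hn1 + ((d3 x)*p1*r1 + (d1 x)*q1^2 + (d1 x)*p1^2 + (d0 x)*q1*r1 + (-1)*iR*(d3 x)*q1 + iR*(d0 x)*p1) * hn2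
  · linear_combination (0:Rd) * hiR'
  · linear_combination ((d3 x) + (-1)*(d3 x)*p2^2 + (-1)*(d3 x)*p1^2 + (d1 x)*p2*r2 + (d1 x)*p1*r1 + (d0 x)*p2*q2 + (-1)*(d0 x)*p1*q1 + (-1)*iR*(d1 x)*q2 + iR*(d1 x)*q1 + iR*(d0 x)*r2 + iR*(d0 x)*r1 + (-1)*iR^2*(d3 x)) * hiR' + ((d3 x)*r2^2 + (d3 x)*q2^2 + (d1 x)*p2*r2 + (d0 x)*p2*q2 + (-1)*iR*(d1 x)*q2 + iR*(d0 x)*r2) * hn1 + ((d3 x) + (-1)*(d3 x)*p1^2 + (d1 x)*p1*r1 + (-1)*(d0 x)*p1*q1 + iR*(d1 x)*q1 + iR*(d0 x)*r1) * hn2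

set_option maxHeartbeats 1600000 in
set_option maxRecDepth 8000 in
theorem keyId3 (p1 q1 r1 p2 q2 r2 : Rd) (hn1 : p1*p1 + q1*q1 + r1*r1 = 1)
    (hn2 : p2*p2 + q2*q2 + r2*r2 = 1) (x : Ad) :
    scalarDQ (d0 (mkD 0 0 0 1 * (Ed p1 q1 r1 * mkD 0 0 0 1 * Ed p2 q2 r2))) * (Ed p2 q2 r2 * x * Ed p1 q1 r1)
      = scalarDQ (d0 (x * (Ed p1 q1 r1 * mkD 0 0 0 1 * Ed p2 q2 r2))) * (Ed p2 q2 r2 * mkD 0 0 0 1 * Ed p1 q1 r1) := by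
  have hiR' := hiR
  refine dext ?_ ?_ ?_ ?_ <;>
    simp only [scalarDQ_eq, d0_mul, d1_mul, d2_mul, d3_mul, Ed, d0_mk, d1_mk, d2_mk, d3_mk]
  · linear_combination ((-1)*(d2 x)*p2*r2 + (d2 x)*p1*r1 + (d1 x)*q2*r2 + (-1)*(d1 x)*q1*r1 + (d0 x) + (-1)*(d0 x)*r2^2 + (-1)*(d0 x)*r1^2 + (-1)*iR*(d2 x)*q2 + (-1)*iR*(d2 x)*q1 + (-1)*iR*(d1 x)*p2 + (-1)*iR*(d1 x)*p1 + (-1)*iR^2*(d0 x)) * hiR' + ((-1)*(d2 x)*p2*r2 + (d1 x)*q2*r2 + (d0 x) + (-1)*(d0 x)*r2^2 + (-1)*iR*(d2 x)*q2 + (-1)*iR*(d1 x)*p2) * hn1 + ((d2 x)*p1*r1 + (-1)*(d1 x)*q1*r1 + (d0 x)*q1^2 + (d0 x)*p1^2 + (-1)*iR*(d2 x)*q1 + (-1)*iR*(d1 x)*p1) * hn2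
  · linear_combination ((d2 x)*p2*q2 + (d2 x)*p1*q1 + (d1 x) + (-1)*(d1 x)*q2^2 + (-1)*(d1 x)*q1^2 + (d0 x)*q2*r2 + (-1)*(d0 x)*q1*r1 + (-1)*iR*(d2 x)*r2 + iR*(d2 x)*r1 + iR*(d0 x)*p2 + iR*(d0 x)*p1 + (-1)*iR^2*(d1 x)) * hiR' + ((d2 x)*p2*q2 + (d1 x)*r2^2 + (d1 x)*p2^2 + (d0 x)*q2*r2 + (-1)*iR*(d2 x)*r2 + iR*(d0 x)*p2) * hn1 + ((d2 x)*p1*q1 + (d1 x) + (-1)*(d1 x)*q1^2 + (-1)*(d0 x)*q1*r1 + iR*(d2 x)*r1 + iR*(d0 x)*p1) * hn2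
  · linear_combination ((d2 x) + (-1)*(d2 x)*p2^2 + (-1)*(d2 x)*p1^2 + (d1 x)*p2*q2 + (d1 x)*p1*q1 + (-1)*(d0 x)*p2*r2 + (d0 x)*p1*r1 + iR*(d1 x)*r2 + (-1)*iR*(d1 x)*r1 + iR*(d0 x)*q2 + iR*(d0 x)*q1 + (-1)*iR^2*(d2 x)) * hiR' + ((d2 x)*r2^2 + (d2 x)*q2^2 + (d1 x)*p2*q2 + (-1)*(d0 x)*p2*r2 + iR*(d1 x)*r2 + iR*(d0 x)*q2) * hn1 + ((d2 x) + (-1)*(d2 x)*p1^2 + (d1 x)*p1*q1 + (d0 x)*p1*r1 + (-1)*iR*(d1 x)*r1 + iR*(d0 x)*q1) * hn2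
  · linear_combination (0:Rd) * hiR'

theorem Dsc (m : Fin 4) (s : Rd) (y : Ad) : Dm m (scalarDQ s * y) = s * Dm m y := by
  fin_cases m <;> simp [Dm, ds0, ds1, ds2, ds3]

theorem dextD {x y : Ad} (h : ∀ m : Fin 4, Dm m x = Dm m y) : x = y := by
  have h0 := h 0; have h1 := h 1; have h2 := h 2; have h3 := h 3
  simp only [Dm, Matrix.cons_val_zero, Matrix.cons_val_one, Matrix.head_cons,
    Matrix.cons_val_two, Matrix.tail_cons, Matrix.cons_val_three, D0_apply, D1_apply,
    D2_apply, D3_apply] at h0 h1 h2 h3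
  exact dext h0 h1 h2 h3

theorem mkD_zero : mkD 0 0 0 0 = 0 :=
  dext (by rw [d0_mk, d0_zero]) (by rw [d1_mk, d1_zero]) (by rw [d2_mk, d2_zero])
    (by rw [d3_mk, d3_zero])

theorem scalarDQ_zero : scalarDQ 0 = 0 := by rw [scalarDQ_eq]; exact mkD_zero

set_option maxHeartbeats 1000000 in
theorem inner (p1 q1 r1 p2 q2 r2 : Rd) (a : Ad)
    (hkey : ∀ x : Ad,
      scalarDQ (d0 (a * (Ed p1 q1 r1 * a * Ed p2 q2 r2))) * (Ed p2 q2 r2 * x * Ed p1 q1 r1)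
        = scalarDQ (d0 (x * (Ed p1 q1 r1 * a * Ed p2 q2 r2))) * (Ed p2 q2 r2 * a * Ed p1 q1 r1))
    (hα : IsUnit (d0 (a * (Ed p1 q1 r1 * a * Ed p2 q2 r2)))) :
    ∃ b : Fin 3 → Ad,
      (∀ x : Ad, Ed p2 q2 r2 * x * Ed p1 q1 r1 = 0 ↔
          ∃ c : Fin 3 → Rd, x = ∑ j, scalarDQ (c j) * b j) ∧
      (∀ c : Fin 3 → Rd, (∑ j, scalarDQ (c j) * b j) = 0 → c = 0) := by
  set E1 := Ed p1 q1 r1 with hE1def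
  set E2 := Ed p2 q2 r2 with hE2def
  set G := E1 * a * E2 with hG
  set α := d0 (a * G) with halphadef
  have hcond : ∀ x : Ad, E2 * x * E1 = 0 ↔ d0 (x * G) = 0 := by
    intro x
    constructor
    · intro hx
      have h1 := hkey x
      rw [hx, mul_zero] at h1
      have h2 := congrArg (fun z => d0 (z * a)) h1.symm
      simp only [zero_mul, d0_zero] at h2
      rw [mul_assoc (scalarDQ (d0 (x * G))), ds0] at h2
      have h3 : d0 (E2 * a * E1 * a) = α := by
        rw [show E2 * a * E1 * a = E2 * (a * E1 * a) by noncomm_ring, cyc,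
          show a * E1 * a * E2 = a * (E1 * a * E2) by noncomm_ring, ← hG]
      rw [h3, mul_comm] at h2
      exact hα.mul_right_eq_zero.mp h2
    · intro hw
      have h1 := hkey x
      rw [hw, scalarDQ_zero, zero_mul] at h1
      exact cancelD hα h1
  set g : Fin 4 → Rd := ![d0 G, -(d1 G), -(d2 G), -(d3 G)] with hgdef
  have hwsum : ∀ x : Ad, d0 (x * G) = ∑ m, g m * Dm m x := by
    intro x
    rw [d0_mul, Fin.sum_univ_four]
    simp only [hgdef, Dm, Matrix.cons_val_zero, Matrix.cons_val_one, Matrix.head_cons,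
      Matrix.cons_val_two, Matrix.tail_cons, Matrix.cons_val_three, D0_apply, D1_apply,
      D2_apply, D3_apply]
    ring
  obtain ⟨k, hk⟩ : ∃ k : Fin 4, (g k).fst ≠ 0 := by
    by_contra hcon
    push_neg at hcon
    have hαf : α.fst = 0 := by
      rw [halphadef, hwsum a, TrivSqZeroExt.fst_sum]
      refine Finset.sum_eq_zero fun m _ => ?_
      rw [TrivSqZeroExt.fst_mul, hcon m, zero_mul]
    have := TrivSqZeroExt.isUnit_iff_isUnit_fst.mp hα
    rw [hαf] at this
    exact (by simpa using this : IsUnit (0 : ℂ)).ne_zero rfl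
  have hgk : IsUnit (g k) := unitR hk
  set v : Rd := ↑hgk.unit⁻¹ with hvdef
  have hv : g k * v = 1 := hgk.mul_val_inv
  set b : Fin 3 → Ad :=
    fun j => uq (k.succAbove j) - scalarDQ (g (k.succAbove j) * v) * uq k with hbdef
  have hDb : ∀ (m : Fin 4) (j : Fin 3),
      Dm m (b j) = (if k.succAbove j = m then 1 else 0)
        - g (k.succAbove j) * v * (if k = m then 1 else 0) := by
    intro m j
    rw [hbdef]
    simp only [map_sub, Dsc, Duq]
  have hsum_comp : ∀ (m : Fin 4) (c : Fin 3 → Rd),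
      Dm m (∑ j, scalarDQ (c j) * b j) = ∑ j, c j * Dm m (b j) := by
    intro m c
    rw [map_sum]
    exact Finset.sum_congr rfl fun j _ => Dsc m (c j) (b j)
  refine ⟨b, fun x => (hcond x).trans ⟨?_, ?_⟩, ?_⟩
  · -- spanning
    intro hx
    refine ⟨fun j => Dm (k.succAbove j) x, ?_⟩
    refine dextD fun m => ?_
    rw [hsum_comp]
    by_cases hm : m = k
    · subst hm
      rw [hwsum, Fin.sum_univ_succAbove _ m] at hx
      have e : ∀ j : Fin 3, Dm m (b j) = -(g (m.succAbove j) * v) := by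
        intro j
        rw [hDb, if_neg (Fin.succAbove_ne m j), if_pos rfl]
        ring
      simp only [e]
      rw [Fin.sum_univ_three] at hx ⊢
      linear_combination v * hx - Dm m x * hv
    · obtain ⟨j0, hj0⟩ := Fin.exists_succAbove_eq (Ne.symm (Ne.intro fun h => hm h.symm) : m ≠ k)
      have hsum : (∑ j, (Dm (k.succAbove j) x) * Dm m (b j)) = Dm (k.succAbove j0) x := by
        rw [Finset.sum_eq_single j0]
        · rw [hDb, if_pos hj0, if_neg fun h => hm h.symm]
          ring
        · intro j2 _ hj2
          rw [hDb, if_neg fun h => hj2 (Fin.succAbove_right_injective (h.trans hj0.symm)),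
            if_neg fun h => hm h.symm]
          ring
        · intro h
          exact absurd (Finset.mem_univ j0) h
      rw [hsum, hj0]
  · -- membership
    rintro ⟨c, rfl⟩
    rw [hwsum]
    have hbG : ∀ j : Fin 3, (∑ m, g m * Dm m (b j)) = 0 := by
      intro j
      have step : ∀ m : Fin 4, g m * Dm m (b j)
          = (if k.succAbove j = m then g m else 0)
            - (if k = m then g m * (g (k.succAbove j) * v) else 0) := by
        intro m
        rw [hDb]
        split_ifs <;> ring
      calc (∑ m, g m * Dm m (b j))
          = ∑ m, ((if k.succAbove j = m then g m else 0)
              - (if k = m then g m * (g (k.succAbove j) * v) else 0)) :=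
            Finset.sum_congr rfl fun m _ => step m
        _ = g (k.succAbove j) - g k * (g (k.succAbove j) * v) := by
            rw [Finset.sum_sub_distrib, Finset.sum_ite_eq, Finset.sum_ite_eq]
            simp
        _ = 0 := by linear_combination (-(g (k.succAbove j))) * hv
    calc ∑ m, g m * Dm m (∑ j, scalarDQ (c j) * b j)
        = ∑ m, ∑ j, g m * (c j * Dm m (b j)) := by
          refine Finset.sum_congr rfl fun m _ => ?_
          rw [hsum_comp, Finset.mul_sum]
      _ = ∑ j, ∑ m, g m * (c j * Dm m (b j)) := Finset.sum_comm
      _ = ∑ j, c j * ∑ m, g m * Dm m (b j) := by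
          refine Finset.sum_congr rfl fun j _ => ?_
          rw [Finset.mul_sum]
          exact Finset.sum_congr rfl fun m _ => by ring
      _ = 0 := by simp [hbG]
  · -- independence
    intro c hc
    funext j0
    have h1 := congrArg (Dm (k.succAbove j0)) hc
    rw [hsum_comp, map_zero] at h1
    rw [Finset.sum_eq_single j0] at h1
    · rw [hDb, if_pos rfl, if_neg (Fin.ne_succAbove k j0)] at h1
      simpa using h1
    · intro j2 _ hj2
      rw [hDb, if_neg fun h => hj2 (Fin.succAbove_right_injective h),
        if_neg (Fin.ne_succAbove k j0)]
      ring
    · intro h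
      exact absurd (Finset.mem_univ j0) h

theorem iR_fst : iR.fst = Complex.I := rfl

set_option maxHeartbeats 4000000 in
theorem master (p1 q1 r1 p2 q2 r2 : Rd) (hn1 : p1*p1 + q1*q1 + r1*r1 = 1)
    (hn2 : p2*p2 + q2*q2 + r2*r2 = 1) :
    ∃ b : Fin 3 → Ad,
      (∀ x : Ad, Ed p2 q2 r2 * x * Ed p1 q1 r1 = 0 ↔
          ∃ c : Fin 3 → Rd, x = ∑ j, scalarDQ (c j) * b j) ∧
      (∀ c : Fin 3 → Rd, (∑ j, scalarDQ (c j) * b j) = 0 → c = 0) := by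
  by_cases c0 : (d0 (mkD 1 0 0 0 * (Ed p1 q1 r1 * mkD 1 0 0 0 * Ed p2 q2 r2))).fst = 0
  · by_cases c1 : (d0 (mkD 0 1 0 0 * (Ed p1 q1 r1 * mkD 0 1 0 0 * Ed p2 q2 r2))).fst = 0
    · by_cases c2 : (d0 (mkD 0 0 1 0 * (Ed p1 q1 r1 * mkD 0 0 1 0 * Ed p2 q2 r2))).fst = 0
      · by_cases c3 : (d0 (mkD 0 0 0 1 * (Ed p1 q1 r1 * mkD 0 0 0 1 * Ed p2 q2 r2))).fst = 0
        · exfalso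
          simp only [d0_mul, d1_mul, d2_mul, d3_mul, Ed, d0_mk, d1_mk, d2_mk, d3_mk,
            TrivSqZeroExt.fst_mul, fst_sub, fst_add, fst_neg, fst_one, fst_zero,
            iR_fst] at c0 c1 c2 c3
          have h1 : (1 : ℂ) = 0 := by
            linear_combination (-1/4) * c0 + (1/4) * c1 + (1/4) * c2 + (1/4) * c3
              + ((1:ℂ)) * Complex.I_mul_I
          exact one_ne_zero h1
        · exact inner p1 q1 r1 p2 q2 r2 (mkD 0 0 0 1) (keyId3 p1 q1 r1 p2 q2 r2 hn1 hn2)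
            (unitR c3)
      · exact inner p1 q1 r1 p2 q2 r2 (mkD 0 0 1 0) (keyId2 p1 q1 r1 p2 q2 r2 hn1 hn2)
          (unitR c2)
    · exact inner p1 q1 r1 p2 q2 r2 (mkD 0 1 0 0) (keyId1 p1 q1 r1 p2 q2 r2 hn1 hn2)
        (unitR c1)
  · exact inner p1 q1 r1 p2 q2 r2 (mkD 1 0 0 0) (keyId0 p1 q1 r1 p2 q2 r2 hn1 hn2)
      (unitR c0)

noncomputable def pd (a b : ℝ) : Rd := ((a : ℂ), (b : ℂ))

theorem pd_fst (a b : ℝ) : (pd a b).fst = (a : ℂ) := rfl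
theorem pd_snd (a b : ℝ) : (pd a b).snd = (b : ℂ) := rfl

theorem Ed_def (p q r : Rd) : Ed p q r = mkD iR (-p) (-q) (-r) := rfl

theorem pure_parts (h : DualNumber (Quaternion ℝ)) (hh : h * h = -1) :
    h.fst.re = 0 ∧ h.snd.re = 0 ∧
      (h.fst.imI * h.fst.imI + h.fst.imJ * h.fst.imJ + h.fst.imK * h.fst.imK = 1) ∧
      (h.fst.imI * h.snd.imI + h.fst.imJ * h.snd.imJ + h.fst.imK * h.snd.imK = 0) := by
  have hf : h.fst * h.fst = -1 := by
    have := congrArg TrivSqZeroExt.fst hh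
    simpa [TrivSqZeroExt.fst_mul] using this
  have hs : h.fst * h.snd + h.snd * h.fst = 0 := by
    have := congrArg TrivSqZeroExt.snd hh
    simpa [TrivSqZeroExt.snd_mul, smul_eq_mul, op_smul_eq_mul] using this
  set A := h.fst with hA
  set B := h.snd with hB
  have e0 := congrArg QuaternionAlgebra.re hf
  have e1 := congrArg QuaternionAlgebra.imI hf
  have e2 := congrArg QuaternionAlgebra.imJ hf
  have e3 := congrArg QuaternionAlgebra.imK hf
  simp only [Quaternion.re_mul, Quaternion.imI_mul, Quaternion.imJ_mul, Quaternion.imK_mul,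
    Quaternion.re_neg, Quaternion.re_one, Quaternion.imI_neg, Quaternion.imI_one,
    Quaternion.imJ_neg, Quaternion.imJ_one, Quaternion.imK_neg, Quaternion.imK_one]
    at e0 e1 e2 e3
  have f0 := congrArg QuaternionAlgebra.re hs
  have f1 := congrArg QuaternionAlgebra.imI hs
  have f2 := congrArg QuaternionAlgebra.imJ hs
  have f3 := congrArg QuaternionAlgebra.imK hs
  simp only [Quaternion.re_add, Quaternion.imI_add, Quaternion.imJ_add, Quaternion.imK_add,
    Quaternion.re_mul, Quaternion.imI_mul, Quaternion.imJ_mul, Quaternion.imK_mul,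
    Quaternion.re_zero, Quaternion.imI_zero, Quaternion.imJ_zero, Quaternion.imK_zero]
    at f0 f1 f2 f3
  have hA0 : A.re = 0 := by
    have key : A.re * (A.re * A.re + 1) = 0 := by
      linear_combination A.re * e0 + (A.imI / 2) * e1 + (A.imJ / 2) * e2 + (A.imK / 2) * e3
    rcases mul_eq_zero.mp key with h' | h'
    · exact h'
    · nlinarith [mul_self_nonneg A.re]
  have hnormA : A.imI * A.imI + A.imJ * A.imJ + A.imK * A.imK = 1 := by
    linear_combination (-1 : ℝ) * e0 + A.re * hA0
  have hB0 : B.re = 0 := by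
    linear_combination (A.imI / 2) * f1 + (A.imJ / 2) * f2 + (A.imK / 2) * f3
      - B.re * hnormA - (A.imI * B.imI + A.imJ * B.imJ + A.imK * B.imK) * hA0
  have hdot : A.imI * B.imI + A.imJ * B.imJ + A.imK * B.imK = 0 := by
    linear_combination (-1 / 2 : ℝ) * f0 + B.re * hA0
  exact ⟨hA0, hB0, hnormA, hdot⟩


/-- For real dual quaternions `h₁, h₂` with `h₁² = h₂² = -1`, the set
`{x ∈ 𝔻ℍ_ℂ : (i - h₂)·x·(i - h₁) = 0}` is a free module of rank 3 over `𝔻_ℂ`: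
there is a family `b : Fin 3 → 𝔻ℍ_ℂ` which spans it over `𝔻_ℂ` and is `𝔻_ℂ`-linearly
independent. -/
theorem stmt_6
    (h₁ h₂ : DualNumber (Quaternion ℝ))
    (hh₁ : h₁ * h₁ = -1) (hh₂ : h₂ * h₂ = -1) :
    ∃ b : Fin 3 → DualNumber (Quaternion ℂ),
      (∀ x : DualNumber (Quaternion ℂ),
          (iDQ - dualQuatC h₂) * x * (iDQ - dualQuatC h₁) = 0 ↔
            ∃ c : Fin 3 → DualNumber ℂ, x = ∑ j, scalarDQ (c j) * b j) ∧
      (∀ c : Fin 3 → DualNumber ℂ, (∑ j, scalarDQ (c j) * b j) = 0 → c = 0) := by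
  obtain ⟨ha1, hb1, hn1f, hd1⟩ := pure_parts h₁ hh₁
  obtain ⟨ha2, hb2, hn2f, hd2⟩ := pure_parts h₂ hh₂
  have hn1 : (pd h₁.fst.imI h₁.snd.imI)
        * (pd h₁.fst.imI h₁.snd.imI)
      + (pd h₁.fst.imJ h₁.snd.imJ)
        * (pd h₁.fst.imJ h₁.snd.imJ)
      + (pd h₁.fst.imK h₁.snd.imK)
        * (pd h₁.fst.imK h₁.snd.imK) = 1 := by
    refine TrivSqZeroExt.ext ?_ ?_
    · show ((h₁.fst.imI : ℂ) * h₁.fst.imI + (h₁.fst.imJ : ℂ) * h₁.fst.imJ)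
        + (h₁.fst.imK : ℂ) * h₁.fst.imK = 1
      exact_mod_cast congrArg (Complex.ofReal) hn1f
    · show (((h₁.fst.imI : ℂ) * h₁.snd.imI + (h₁.snd.imI : ℂ) * h₁.fst.imI)
        + ((h₁.fst.imJ : ℂ) * h₁.snd.imJ + (h₁.snd.imJ : ℂ) * h₁.fst.imJ))
        + (((h₁.fst.imK : ℂ) * h₁.snd.imK + (h₁.snd.imK : ℂ) * h₁.fst.imK)) = 0
      have hC := congrArg (Complex.ofReal) hd1
      push_cast at hC
      linear_combination 2 * hC
  have hE1 : iDQ - dualQuatC h₁ = Ed (pd h₁.fst.imI h₁.snd.imI)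
      (pd h₁.fst.imJ h₁.snd.imJ)
      (pd h₁.fst.imK h₁.snd.imK) := by
    have z : pd 0 0 = 0 := by
      refine TrivSqZeroExt.ext ?_ ?_ <;> simp [pd_fst, pd_snd]
    refine dext ?_ ?_ ?_ ?_
    · rw [d0_sub, Ed_def, d0_mk,
        show d0 iDQ = iR from rfl,
        show d0 (dualQuatC h₁) = pd h₁.fst.re h₁.snd.re from rfl,
        ha1, hb1, z, sub_zero]
    · rw [d1_sub, Ed_def, d1_mk,
        show d1 iDQ = 0 from rfl,
        show d1 (dualQuatC h₁) = pd h₁.fst.imI h₁.snd.imI from rfl,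
        zero_sub]
    · rw [d2_sub, Ed_def, d2_mk,
        show d2 iDQ = 0 from rfl,
        show d2 (dualQuatC h₁) = pd h₁.fst.imJ h₁.snd.imJ from rfl,
        zero_sub]
    · rw [d3_sub, Ed_def, d3_mk,
        show d3 iDQ = 0 from rfl,
        show d3 (dualQuatC h₁) = pd h₁.fst.imK h₁.snd.imK from rfl,
        zero_sub]
  have hn2 : (pd h₂.fst.imI h₂.snd.imI)
        * (pd h₂.fst.imI h₂.snd.imI)
      + (pd h₂.fst.imJ h₂.snd.imJ)
        * (pd h₂.fst.imJ h₂.snd.imJ)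
      + (pd h₂.fst.imK h₂.snd.imK)
        * (pd h₂.fst.imK h₂.snd.imK) = 1 := by
    refine TrivSqZeroExt.ext ?_ ?_
    · show ((h₂.fst.imI : ℂ) * h₂.fst.imI + (h₂.fst.imJ : ℂ) * h₂.fst.imJ)
        + (h₂.fst.imK : ℂ) * h₂.fst.imK = 1
      exact_mod_cast congrArg (Complex.ofReal) hn2f
    · show (((h₂.fst.imI : ℂ) * h₂.snd.imI + (h₂.snd.imI : ℂ) * h₂.fst.imI)
        + ((h₂.fst.imJ : ℂ) * h₂.snd.imJ + (h₂.snd.imJ : ℂ) * h₂.fst.imJ))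
        + (((h₂.fst.imK : ℂ) * h₂.snd.imK + (h₂.snd.imK : ℂ) * h₂.fst.imK)) = 0
      have hC := congrArg (Complex.ofReal) hd2
      push_cast at hC
      linear_combination 2 * hC
  have hE2 : iDQ - dualQuatC h₂ = Ed (pd h₂.fst.imI h₂.snd.imI)
      (pd h₂.fst.imJ h₂.snd.imJ)
      (pd h₂.fst.imK h₂.snd.imK) := by
    have z : pd 0 0 = 0 := by
      refine TrivSqZeroExt.ext ?_ ?_ <;> simp [pd_fst, pd_snd]
    refine dext ?_ ?_ ?_ ?_
    · rw [d0_sub, Ed_def, d0_mk,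
        show d0 iDQ = iR from rfl,
        show d0 (dualQuatC h₂) = pd h₂.fst.re h₂.snd.re from rfl,
        ha2, hb2, z, sub_zero]
    · rw [d1_sub, Ed_def, d1_mk,
        show d1 iDQ = 0 from rfl,
        show d1 (dualQuatC h₂) = pd h₂.fst.imI h₂.snd.imI from rfl,
        zero_sub]
    · rw [d2_sub, Ed_def, d2_mk,
        show d2 iDQ = 0 from rfl,
        show d2 (dualQuatC h₂) = pd h₂.fst.imJ h₂.snd.imJ from rfl,
        zero_sub]
    · rw [d3_sub, Ed_def, d3_mk,
        show d3 iDQ = 0 from rfl,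
        show d3 (dualQuatC h₂) = pd h₂.fst.imK h₂.snd.imK from rfl,
        zero_sub]
  obtain ⟨b, hb, hind⟩ := master _ _ _ _ _ _ hn1 hn2
  refine ⟨b, fun x => ?_, hind⟩
  rw [hE1, hE2]
  exact hb x

end
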